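/- Let π_b be a behavior policy of the fixed finite discounted MDP with π_b(s,a) > 0 for all (s,a), let β > 0, and let π' be a policy satisfying ∑_a π_b(s,a) A_R^{π'}(s,a) ≥ β for every state s. Then for any policy π with π(s,a) > 0 for all (s,a), J_R(π) − J_R(π') ≥ β/(1−γ) − (ε'/(1−γ)) √(2 D^π_KL(π, π_b)), where ε' = max_{s,a} |A_R^{π'}(s,a)|. -/

import Mathlib

open Finset

/-- Time-`t` state distribution of policy `π` in the MDP with transitions `P`
and initial distribution `μ`. -/
noncomputable def pDist {S A : Type*} [Fintype S] [Fintype A]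
    (P : S → A → S → ℝ) (μ : S → ℝ) (π : S → A → ℝ) : ℕ → S → ℝ
  | 0 => μ
  | t + 1 => fun s' => ∑ s, ∑ a, pDist P μ π t s * π s a * P s a s'

/-- Discounted state visitation distribution `d^π`. -/
noncomputable def dvisit {S A : Type*} [Fintype S] [Fintype A]
    (P : S → A → S → ℝ) (μ : S → ℝ) (γ : ℝ) (π : S → A → ℝ) (s : S) : ℝ :=
  (1 - γ) * ∑' t : ℕ, γ ^ t * pDist P μ π t s

/-- Discounted return `J_R(π)`. -/
noncomputable def Jret {S A : Type*} [Fintype S] [Fintype A]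
    (P : S → A → S → ℝ) (μ : S → ℝ) (γ : ℝ) (R : S → A → ℝ) (π : S → A → ℝ) : ℝ :=
  ∑' t : ℕ, γ ^ t * ∑ s, ∑ a, pDist P μ π t s * π s a * R s a

/-- Advantage function `A_R^π(s,a) = Q_R^π(s,a) - V_R^π(s)`, expressed in terms of
the value function `V` of the policy. -/
noncomputable def Adv {S A : Type*} [Fintype S]
    (P : S → A → S → ℝ) (γ : ℝ) (R : S → A → ℝ) (V : S → ℝ) (s : S) (a : A) : ℝ :=
  (R s a + γ * ∑ s', P s a s' * V s') - V s

/-- KL divergence between two distributions on a finite type. -/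
noncomputable def KL {X : Type*} [Fintype X] (p q : X → ℝ) : ℝ :=
  ∑ x, p x * Real.log (p x / q x)

/-- Total variation distance between two distributions on a finite type. -/
noncomputable def TV {X : Type*} [Fintype X] (p q : X → ℝ) : ℝ :=
  (1 / 2) * ∑ x, |p x - q x|

/-! ### Auxiliary calculus lemmas for Pinsker's inequality -/

noncomputable def phiAux (t : ℝ) : ℝ := t * Real.log t - t + 1 - 3*(t-1)^2/(2*(t+2))
noncomputable def phiAux1 (t : ℝ) : ℝ := Real.log t - 3*(t-1)*(t+5)/(2*(t+2)^2)
noncomputable def phiAux2 (t : ℝ) : ℝ := 1/t - 27/(t+2)^3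

lemma hasDerivAt_phiAux {t : ℝ} (ht : 0 < t) : HasDerivAt phiAux (phiAux1 t) t := by
  have h2 : (2*(t+2)) ≠ 0 := by nlinarith
  have hq : HasDerivAt (fun t : ℝ => 3*(t-1)^2/(2*(t+2)))
      (((3*(2*(t-1)))*(2*(t+2)) - 3*(t-1)^2*2) / (2*(t+2))^2) t := by
    exact HasDerivAt.div
      (by simpa using (((hasDerivAt_id t).sub_const 1).pow 2).const_mul 3)
      (by simpa using ((hasDerivAt_id t).add_const 2).const_mul 2) h2
  have h1 : HasDerivAt (fun t : ℝ => t * Real.log t - t + 1)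
      ((Real.log t + 1) - 1) t := by
    simpa using ((Real.hasDerivAt_mul_log ht.ne').sub (hasDerivAt_id t)).add_const 1
  have := h1.sub hq
  refine this.congr_deriv ?_
  unfold phiAux1
  field_simp
  ring

lemma hasDerivAt_phiAux1 {t : ℝ} (ht : 0 < t) : HasDerivAt phiAux1 (phiAux2 t) t := by
  have h2 : (2*(t+2)^2) ≠ 0 := by nlinarith
  have hq : HasDerivAt (fun t : ℝ => 3*(t-1)*(t+5)/(2*(t+2)^2))
      (((3*((t+5)+(t-1)))*(2*(t+2)^2) - 3*(t-1)*(t+5)*(2*(2*(t+2)))) / (2*(t+2)^2)^2) t := by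
    refine HasDerivAt.div ?_ ?_ h2
    · have : HasDerivAt (fun t : ℝ => 3*(t-1)*(t+5)) (3*(t+5)+(3*(t-1))) t := by
        exact ((((hasDerivAt_id t).sub_const 1).const_mul 3).mul
          ((hasDerivAt_id t).add_const 5)).congr_deriv (by simp)
      exact this.congr_deriv (by ring)
    · simpa using (((hasDerivAt_id t).add_const 2).pow 2).const_mul 2
  have := (Real.hasDerivAt_log ht.ne').sub hq
  refine this.congr_deriv ?_
  unfold phiAux2
  field_simp
  ring

lemma phiAux2_nonneg {t : ℝ} (ht : 0 < t) : 0 ≤ phiAux2 t := by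
  unfold phiAux2
  rw [sub_nonneg, div_le_div_iff₀ (by positivity) ht]
  nlinarith [sq_nonneg (t-1), ht.le]

lemma phiAux_nonneg {t : ℝ} (ht : 0 < t) : 0 ≤ phiAux t := by
  have hphi1_mono : MonotoneOn phiAux1 (Set.Ioi 0) := by
    refine monotoneOn_of_deriv_nonneg (convex_Ioi 0) ?_ ?_ ?_
    · intro x hx; exact (hasDerivAt_phiAux1 hx).continuousAt.continuousWithinAt
    · intro x hx
      rw [interior_Ioi] at hx
      exact (hasDerivAt_phiAux1 hx).differentiableAt.differentiableWithinAt
    · intro x hx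
      rw [interior_Ioi] at hx
      rw [(hasDerivAt_phiAux1 hx).deriv]
      exact phiAux2_nonneg hx
  have hphi1_one : phiAux1 1 = 0 := by unfold phiAux1; norm_num
  have hphi_one : phiAux 1 = 0 := by unfold phiAux; norm_num
  rcases le_total t 1 with h | h
  · have hanti : AntitoneOn phiAux (Set.Ioc 0 1) := by
      refine antitoneOn_of_deriv_nonpos (convex_Ioc 0 1) ?_ ?_ ?_
      · intro x hx; exact (hasDerivAt_phiAux hx.1).continuousAt.continuousWithinAt
      · intro x hx
        rw [interior_Ioc] at hx
        exact (hasDerivAt_phiAux hx.1).differentiableAt.differentiableWithinAt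
      · intro x hx
        rw [interior_Ioc] at hx
        rw [(hasDerivAt_phiAux hx.1).deriv]
        have := hphi1_mono hx.1 (by norm_num : (1:ℝ) ∈ Set.Ioi 0) hx.2.le
        rw [hphi1_one] at this; exact this
    have := hanti ⟨ht, h⟩ ⟨one_pos, le_refl 1⟩ h
    rw [hphi_one] at this; exact this
  · have hmono : MonotoneOn phiAux (Set.Ici 1) := by
      refine monotoneOn_of_deriv_nonneg (convex_Ici 1) ?_ ?_ ?_
      · intro x hx
        exact (hasDerivAt_phiAux (lt_of_lt_of_le one_pos hx)).continuousAt.continuousWithinAt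
      · intro x hx
        rw [interior_Ici] at hx
        exact (hasDerivAt_phiAux (lt_trans one_pos hx)).differentiableAt.differentiableWithinAt
      · intro x hx
        rw [interior_Ici] at hx
        rw [(hasDerivAt_phiAux (lt_trans one_pos hx)).deriv]
        have := hphi1_mono (by norm_num : (1:ℝ) ∈ Set.Ioi 0) (Set.mem_Ioi.mpr (lt_trans one_pos hx)) hx.le
        rw [hphi1_one] at this; exact this
    have := hmono (Set.mem_Ici.mpr (le_refl 1)) (Set.mem_Ici.mpr h) h
    rw [hphi_one] at this; exact this

lemma key_pointwise {p q : ℝ} (hp : 0 < p) (hq : 0 < q) :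
    3*(p-q)^2/(2*(p+2*q)) ≤ p * Real.log (p/q) - p + q := by
  have ht : 0 < p/q := div_pos hp hq
  have := phiAux_nonneg ht
  unfold phiAux at this
  have h1 : p * Real.log (p/q) - p + q - 3*(p-q)^2/(2*(p+2*q)) =
      q * ((p/q) * Real.log (p/q) - (p/q) + 1 - 3*((p/q)-1)^2/(2*((p/q)+2))) := by
    field_simp
  nlinarith [mul_nonneg hq.le this]

/-- Pinsker's inequality for finite distributions. -/
lemma pinsker_aux {X : Type*} [Fintype X] (p q : X → ℝ) (hp : ∀ x, 0 < p x)
    (hq : ∀ x, 0 < q x) (hp1 : ∑ x, p x = 1) (hq1 : ∑ x, q x = 1) :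
    (∑ x, |p x - q x|) ^ 2 ≤ 2 * KL p q := by
  have hKLge : ∑ x, 3*(p x - q x)^2/(2*(p x + 2*q x)) ≤ KL p q := by
    calc ∑ x, 3*(p x - q x)^2/(2*(p x + 2*q x))
        ≤ ∑ x, (p x * Real.log (p x / q x) - p x + q x) :=
          Finset.sum_le_sum fun x _ => key_pointwise (hp x) (hq x)
      _ = KL p q := by
          simp only [sub_add]
          rw [Finset.sum_sub_distrib, Finset.sum_sub_distrib, hp1, hq1]
          simp [KL]
  have hterm : ∀ x : X, |p x - q x| =
      Real.sqrt (3*(p x - q x)^2/(2*(p x + 2*q x))) * Real.sqrt (2*(p x + 2*q x)/3) := by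
    intro x
    have h1 := hp x; have h2 := hq x
    rw [← Real.sqrt_mul (by positivity)]
    have h : 3*(p x - q x)^2/(2*(p x + 2*q x)) * (2*(p x + 2*q x)/3) = (p x - q x)^2 := by
      field_simp
    rw [h, Real.sqrt_sq_eq_abs]
  have hCS : ∑ x, |p x - q x| ≤
      Real.sqrt (∑ x, 3*(p x - q x)^2/(2*(p x + 2*q x))) *
        Real.sqrt (∑ x, 2*(p x + 2*q x)/3) := by
    rw [Finset.sum_congr rfl fun x _ => hterm x]
    exact Real.sum_sqrt_mul_sqrt_le _ (fun x => by have := hp x; have := hq x; positivity)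
      (fun x => by have := hp x; have := hq x; positivity)
  have hsum2 : ∑ x, 2*(p x + 2*q x)/3 = 2 := by
    have h : ∑ x, 2*(p x + 2*q x)/3 = 2/3 * ∑ x, (p x + 2*q x) := by
      rw [Finset.mul_sum]; exact Finset.sum_congr rfl fun x _ => by ring
    rw [h, Finset.sum_add_distrib, ← Finset.mul_sum, hp1, hq1]; norm_num
  have h0 : 0 ≤ ∑ x, |p x - q x| := Finset.sum_nonneg fun x _ => abs_nonneg _
  have hKL0 : 0 ≤ ∑ x, 3*(p x - q x)^2/(2*(p x + 2*q x)) :=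
    Finset.sum_nonneg fun x _ => by have := hp x; have := hq x; positivity
  calc (∑ x, |p x - q x|) ^ 2
      ≤ (Real.sqrt (∑ x, 3*(p x - q x)^2/(2*(p x + 2*q x))) *
          Real.sqrt (∑ x, 2*(p x + 2*q x)/3)) ^ 2 := pow_le_pow_left₀ h0 hCS 2
    _ = (∑ x, 3*(p x - q x)^2/(2*(p x + 2*q x))) * (∑ x, 2*(p x + 2*q x)/3) := by
        rw [mul_pow, Real.sq_sqrt hKL0, Real.sq_sqrt (by rw [hsum2]; norm_num)]
    _ = 2 * ∑ x, 3*(p x - q x)^2/(2*(p x + 2*q x)) := by rw [hsum2]; ring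
    _ ≤ 2 * KL p q := by linarith

/-! ### Auxiliary summation lemmas -/

lemma summable_geom_bdd {γ : ℝ} (hγ0 : 0 ≤ γ) (hγ1 : γ < 1) {b : ℕ → ℝ} {C : ℝ}
    (hC : ∀ t, |b t| ≤ C) : Summable (fun t => γ ^ t * b t) := by
  apply Summable.of_norm_bounded
    ((summable_geometric_of_lt_one hγ0 hγ1).mul_left C)
  intro t
  have h : ‖γ ^ t * b t‖ = γ ^ t * |b t| := by
    rw [norm_mul, Real.norm_eq_abs, Real.norm_eq_abs, abs_pow, abs_of_nonneg hγ0]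
  rw [h, mul_comm C]
  exact mul_le_mul_of_nonneg_left (hC t) (pow_nonneg hγ0 t)

lemma telescope_sum {γ : ℝ} {u b : ℕ → ℝ} (h : ∀ t, u t = b t + γ * u (t+1)) :
    ∀ n, u 0 = (∑ t ∈ Finset.range n, γ ^ t * b t) + γ ^ n * u n := by
  intro n
  induction n with
  | zero => simp
  | succ n ih =>
    rw [Finset.sum_range_succ]
    rw [ih, h n]
    ring

lemma tsum_of_telescope {γ : ℝ} (hγ0 : 0 ≤ γ) (hγ1 : γ < 1) {u b : ℕ → ℝ} {C : ℝ}
    (h : ∀ t, u t = b t + γ * u (t+1)) (hu : ∀ t, |u t| ≤ C)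
    (hb : Summable fun t => γ ^ t * b t) :
    ∑' t, γ ^ t * b t = u 0 := by
  have hlim1 : Filter.Tendsto (fun n => ∑ t ∈ Finset.range n, γ ^ t * b t)
      Filter.atTop (nhds (∑' t, γ ^ t * b t)) := hb.hasSum.tendsto_sum_nat
  have hlim2 : Filter.Tendsto (fun n => γ ^ n * u n) Filter.atTop (nhds 0) := by
    refine squeeze_zero_norm (fun n => ?_)
      (by simpa using (tendsto_pow_atTop_nhds_zero_of_lt_one hγ0 hγ1).const_mul C)
    have h : ‖γ ^ n * u n‖ = γ ^ n * |u n| := by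
      rw [norm_mul, Real.norm_eq_abs, Real.norm_eq_abs, abs_pow, abs_of_nonneg hγ0]
    rw [h, mul_comm C]
    exact mul_le_mul_of_nonneg_left (hu n) (pow_nonneg hγ0 n)
  have hcomb : Filter.Tendsto (fun n => (∑ t ∈ Finset.range n, γ ^ t * b t) + γ ^ n * u n)
      Filter.atTop (nhds (∑' t, γ ^ t * b t + 0)) := hlim1.add hlim2
  have hconst : (fun n => (∑ t ∈ Finset.range n, γ ^ t * b t) + γ ^ n * u n) = fun _ => u 0 :=
    funext fun n => (telescope_sum h n).symm
  rw [hconst] at hcomb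
  have := tendsto_nhds_unique tendsto_const_nhds hcomb
  rw [this, add_zero]

/-! ### MDP distribution lemmas -/

lemma pDist_nonneg {S A : Type*} [Fintype S] [Fintype A]
    {P : S → A → S → ℝ} {μ : S → ℝ} {π : S → A → ℝ}
    (hP0 : ∀ s a s', 0 ≤ P s a s') (hμ0 : ∀ s, 0 ≤ μ s) (hπ0 : ∀ s a, 0 ≤ π s a) :
    ∀ t s, 0 ≤ pDist P μ π t s := by
  intro t
  induction t with
  | zero => exact hμ0
  | succ t ih =>
    intro s'
    exact Finset.sum_nonneg fun s _ => Finset.sum_nonneg fun a _ =>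
      mul_nonneg (mul_nonneg (ih s) (hπ0 s a)) (hP0 s a s')

lemma pDist_sum_one {S A : Type*} [Fintype S] [Fintype A]
    {P : S → A → S → ℝ} {μ : S → ℝ} {π : S → A → ℝ}
    (hP1 : ∀ s a, ∑ s', P s a s' = 1) (hμ1 : ∑ s, μ s = 1) (hπ1 : ∀ s, ∑ a, π s a = 1) :
    ∀ t, ∑ s, pDist P μ π t s = 1 := by
  intro t
  induction t with
  | zero => exact hμ1
  | succ t ih =>
    have h : ∑ s', pDist P μ π (t+1) s' = ∑ s, ∑ a, pDist P μ π t s * π s a := by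
      show ∑ s', ∑ s, ∑ a, pDist P μ π t s * π s a * P s a s' = _
      rw [Finset.sum_comm]
      refine Finset.sum_congr rfl fun s _ => ?_
      rw [Finset.sum_comm]
      refine Finset.sum_congr rfl fun a _ => ?_
      rw [← Finset.mul_sum, hP1, mul_one]
    rw [h]
    calc ∑ s, ∑ a, pDist P μ π t s * π s a
        = ∑ s, pDist P μ π t s := by
          refine Finset.sum_congr rfl fun s _ => ?_
          rw [← Finset.mul_sum, hπ1, mul_one]
      _ = 1 := ih

lemma pDist_le_one {S A : Type*} [Fintype S] [Fintype A]
    {P : S → A → S → ℝ} {μ : S → ℝ} {π : S → A → ℝ}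
    (hP0 : ∀ s a s', 0 ≤ P s a s') (hP1 : ∀ s a, ∑ s', P s a s' = 1)
    (hμ0 : ∀ s, 0 ≤ μ s) (hμ1 : ∑ s, μ s = 1)
    (hπ0 : ∀ s a, 0 ≤ π s a) (hπ1 : ∀ s, ∑ a, π s a = 1) :
    ∀ t s, pDist P μ π t s ≤ 1 := by
  intro t s
  calc pDist P μ π t s
      ≤ ∑ s', pDist P μ π t s' :=
        Finset.single_le_sum (fun s' _ => pDist_nonneg hP0 hμ0 hπ0 t s') (Finset.mem_univ s)
    _ = 1 := pDist_sum_one hP1 hμ1 hπ1 t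

/-- One-step expansion identity. -/
lemma step_identity {S A : Type*} [Fintype S] [Fintype A]
    (P : S → A → S → ℝ) (μ : S → ℝ) (ρ : S → A → ℝ) (V : S → ℝ) (R : S → A → ℝ)
    (γ : ℝ) (t : ℕ) :
    ∑ s, pDist P μ ρ t s * (∑ a, ρ s a * (R s a + γ * ∑ s', P s a s' * V s'))
      = (∑ s, ∑ a, pDist P μ ρ t s * ρ s a * R s a)
        + γ * ∑ s', pDist P μ ρ (t+1) s' * V s' := by
  set p := pDist P μ ρ t with hp
  have hfact : ∀ s a, ∑ s', p s * ρ s a * P s a s' * V s'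
      = p s * ρ s a * ∑ s', P s a s' * V s' := by
    intro s a
    rw [Finset.mul_sum]
    exact Finset.sum_congr rfl fun s' _ => by ring
  have hLHS : ∑ s, p s * (∑ a, ρ s a * (R s a + γ * ∑ s', P s a s' * V s'))
      = (∑ s, ∑ a, p s * ρ s a * R s a)
        + γ * ∑ s, ∑ a, ∑ s', p s * ρ s a * P s a s' * V s' := by
    rw [Finset.mul_sum _ _ γ]
    rw [← Finset.sum_add_distrib]
    refine Finset.sum_congr rfl fun s _ => ?_
    rw [Finset.mul_sum _ _ γ, ← Finset.sum_add_distrib, Finset.mul_sum _ _ (p s)]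
    refine Finset.sum_congr rfl fun a _ => ?_
    rw [hfact]
    ring
  have hRHS : ∑ s', pDist P μ ρ (t+1) s' * V s'
      = ∑ s, ∑ a, ∑ s', p s * ρ s a * P s a s' * V s' := by
    have h1 : ∑ s', pDist P μ ρ (t+1) s' * V s'
        = ∑ s', ∑ s, ∑ a, p s * ρ s a * P s a s' * V s' := by
      refine Finset.sum_congr rfl fun s' _ => ?_
      show (∑ s, ∑ a, p s * ρ s a * P s a s') * V s' = _
      rw [Finset.sum_mul]
      exact Finset.sum_congr rfl fun s _ => by rw [Finset.sum_mul]
    rw [h1, Finset.sum_comm]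
    exact Finset.sum_congr rfl fun s _ => Finset.sum_comm
  rw [hLHS, hRHS]

/-- Bound for probability-weighted sums. -/
lemma weighted_abs_le {S : Type*} [Fintype S] (q f : S → ℝ)
    (hq0 : ∀ s, 0 ≤ q s) (hqle : ∀ s, q s ≤ 1) :
    |∑ s, q s * f s| ≤ ∑ s, |f s| := by
  calc |∑ s, q s * f s| ≤ ∑ s, |q s * f s| := Finset.abs_sum_le_sum_abs _ _
    _ ≤ ∑ s, |f s| := Finset.sum_le_sum fun s _ => by
        rw [abs_mul, abs_of_nonneg (hq0 s)]
        exact mul_le_of_le_one_left (abs_nonneg _) (hqle s)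

/-- If the behavior policy `π_b` has advantage at least `β > 0` over `π'` in every state, then
for any policy `π`,
`J_R(π) − J_R(π') ≥ β/(1−γ) − (ε'/(1−γ)) √(2 D^π_KL(π, π_b))` with `ε' = max_{s,a} |A_R^{π'}(s,a)|`. -/
theorem stmt_5 {S A : Type*} [Fintype S] [Fintype A] [Nonempty S] [Nonempty A]
    (R : S → A → ℝ) (P : S → A → S → ℝ)
    (hP0 : ∀ s a s', 0 ≤ P s a s') (hP1 : ∀ s a, ∑ s', P s a s' = 1)
    (γ : ℝ) (hγ0 : 0 < γ) (hγ1 : γ < 1)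
    (μ : S → ℝ) (hμ0 : ∀ s, 0 ≤ μ s) (hμ1 : ∑ s, μ s = 1)
    (πb : S → A → ℝ) (hπb0 : ∀ s a, 0 < πb s a) (hπb1 : ∀ s, ∑ a, πb s a = 1)
    (π' : S → A → ℝ) (hπ'0 : ∀ s a, 0 ≤ π' s a) (hπ'1 : ∀ s, ∑ a, π' s a = 1)
    (V' : S → ℝ)
    (hV' : ∀ s, V' s = ∑ a, π' s a * (R s a + γ * ∑ s', P s a s' * V' s'))
    (β : ℝ) (hβ : 0 < β)
    (hadv : ∀ s, β ≤ ∑ a, πb s a * Adv P γ R V' s a)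
    (π : S → A → ℝ) (hπ0 : ∀ s a, 0 < π s a) (hπ1 : ∀ s, ∑ a, π s a = 1) :
    Jret P μ γ R π - Jret P μ γ R π' ≥
      β / (1 - γ) -
        ((⨆ s, ⨆ a, |Adv P γ R V' s a|) / (1 - γ)) *
          Real.sqrt (2 * ∑ s, dvisit P μ γ π s * KL (π s) (πb s)) := by
  have hγ0' : (0:ℝ) ≤ γ := hγ0.le
  have h1γ : (0:ℝ) < 1 - γ := by linarith
  set E : ℝ := ⨆ s, ⨆ a, |Adv P γ R V' s a| with hE
  have hA_le : ∀ s a, |Adv P γ R V' s a| ≤ E := by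
    intro s a
    have h1 : |Adv P γ R V' s a| ≤ ⨆ a, |Adv P γ R V' s a| :=
      le_ciSup (f := fun a => |Adv P γ R V' s a|)
        (Set.Finite.bddAbove (Set.finite_range _)) a
    have h2 : (⨆ a, |Adv P γ R V' s a|) ≤ E :=
      le_ciSup (f := fun s => ⨆ a, |Adv P γ R V' s a|)
        (Set.Finite.bddAbove (Set.finite_range _)) s
    exact h1.trans h2
  have hE0 : 0 ≤ E :=
    (abs_nonneg _).trans (hA_le (Classical.arbitrary S) (Classical.arbitrary A))
  have hπ0' : ∀ s a, 0 ≤ π s a := fun s a => (hπ0 s a).le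
  have hp0 : ∀ t s, 0 ≤ pDist P μ π t s := pDist_nonneg hP0 hμ0 hπ0'
  have hp'0 : ∀ t s, 0 ≤ pDist P μ π' t s := pDist_nonneg hP0 hμ0 hπ'0
  have hp1 : ∀ t, ∑ s, pDist P μ π t s = 1 := pDist_sum_one hP1 hμ1 hπ1
  have hp'1 : ∀ t, ∑ s, pDist P μ π' t s = 1 := pDist_sum_one hP1 hμ1 hπ'1
  have hple : ∀ t s, pDist P μ π t s ≤ 1 := pDist_le_one hP0 hP1 hμ0 hμ1 hπ0' hπ1
  have hp'le : ∀ t s, pDist P μ π' t s ≤ 1 := pDist_le_one hP0 hP1 hμ0 hμ1 hπ'0 hπ'1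
  have hπle : ∀ s a, π s a ≤ 1 := by
    intro s a
    calc π s a ≤ ∑ a', π s a' :=
          Finset.single_le_sum (fun a' _ => hπ0' s a') (Finset.mem_univ a)
      _ = 1 := hπ1 s
  have hπ'le : ∀ s a, π' s a ≤ 1 := by
    intro s a
    calc π' s a ≤ ∑ a', π' s a' :=
          Finset.single_le_sum (fun a' _ => hπ'0 s a') (Finset.mem_univ a)
      _ = 1 := hπ'1 s
  set c : S → ℝ := fun s => ∑ a, π s a * Adv P γ R V' s a with hc_def
  set k : S → ℝ := fun s => Real.sqrt (2 * KL (π s) (πb s)) with hk_def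
  have hk0 : ∀ s, 0 ≤ k s := fun s => Real.sqrt_nonneg _
  have hKL0 : ∀ s, 0 ≤ KL (π s) (πb s) := by
    intro s
    have h := pinsker_aux (π s) (πb s) (hπ0 s) (hπb0 s) (hπ1 s) (hπb1 s)
    nlinarith [sq_nonneg (∑ a, |π s a - πb s a|)]
  -- per-state lower bound on c
  have hc_lb : ∀ s, β - E * k s ≤ c s := by
    intro s
    have hTV : ∑ a, |π s a - πb s a| ≤ k s := by
      rw [hk_def]
      exact (Real.le_sqrt (Finset.sum_nonneg fun a _ => abs_nonneg _)
        (by linarith [hKL0 s])).mpr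
        (pinsker_aux (π s) (πb s) (hπ0 s) (hπb0 s) (hπ1 s) (hπb1 s))
    have hsplit : c s = (∑ a, πb s a * Adv P γ R V' s a)
        + ∑ a, (π s a - πb s a) * Adv P γ R V' s a := by
      rw [hc_def, ← Finset.sum_add_distrib]
      exact Finset.sum_congr rfl fun a _ => by ring
    have habs : |∑ a, (π s a - πb s a) * Adv P γ R V' s a| ≤ E * k s := by
      calc |∑ a, (π s a - πb s a) * Adv P γ R V' s a|
          ≤ ∑ a, |(π s a - πb s a) * Adv P γ R V' s a| := Finset.abs_sum_le_sum_abs _ _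
        _ ≤ ∑ a, |π s a - πb s a| * E := Finset.sum_le_sum fun a _ => by
            rw [abs_mul]
            exact mul_le_mul_of_nonneg_left (hA_le s a) (abs_nonneg _)
        _ = E * ∑ a, |π s a - πb s a| := by rw [← Finset.sum_mul, mul_comm]
        _ ≤ E * k s := mul_le_mul_of_nonneg_left hTV hE0
    have h1 := hadv s
    have h2 := (abs_le.mp habs).1
    linarith [hsplit]
  -- recursion for π'
  have hrec' : ∀ t, ∑ s, pDist P μ π' t s * V' s
      = (∑ s, ∑ a, pDist P μ π' t s * π' s a * R s a)
        + γ * ∑ s, pDist P μ π' (t+1) s * V' s := by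
    intro t
    calc ∑ s, pDist P μ π' t s * V' s
        = ∑ s, pDist P μ π' t s * (∑ a, π' s a * (R s a + γ * ∑ s', P s a s' * V' s')) :=
          Finset.sum_congr rfl fun s _ => by rw [← hV' s]
      _ = _ := step_identity P μ π' V' R γ t
  -- formula for c
  have hcs : ∀ s, c s = (∑ a, π s a * (R s a + γ * ∑ s', P s a s' * V' s')) - V' s := by
    intro s
    rw [hc_def]
    calc ∑ a, π s a * Adv P γ R V' s a
        = ∑ a, (π s a * (R s a + γ * ∑ s', P s a s' * V' s') - π s a * V' s) :=
          Finset.sum_congr rfl fun a _ => by unfold Adv; ring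
      _ = _ := by rw [Finset.sum_sub_distrib, ← Finset.sum_mul, hπ1, one_mul]
  -- recursion for π
  have hrecw : ∀ t, ∑ s, pDist P μ π t s * V' s
      = ((∑ s, ∑ a, pDist P μ π t s * π s a * R s a) - ∑ s, pDist P μ π t s * c s)
        + γ * ∑ s, pDist P μ π (t+1) s * V' s := by
    intro t
    have h2 := step_identity P μ π V' R γ t
    have h1 : ∑ s, pDist P μ π t s * c s
        = (∑ s, pDist P μ π t s * (∑ a, π s a * (R s a + γ * ∑ s', P s a s' * V' s')))
          - ∑ s, pDist P μ π t s * V' s := by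
      rw [← Finset.sum_sub_distrib]
      refine Finset.sum_congr rfl fun s _ => ?_
      rw [hcs s]; ring
    linarith
  -- bounds
  have hw_bd : ∀ t, |∑ s, pDist P μ π t s * V' s| ≤ ∑ s, |V' s| :=
    fun t => weighted_abs_le _ _ (hp0 t) (hple t)
  have hu_bd : ∀ t, |∑ s, pDist P μ π' t s * V' s| ≤ ∑ s, |V' s| :=
    fun t => weighted_abs_le _ _ (hp'0 t) (hp'le t)
  have hg_bd : ∀ t, |∑ s, pDist P μ π t s * c s| ≤ ∑ s, |c s| :=
    fun t => weighted_abs_le _ _ (hp0 t) (hple t)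
  have hh_bd : ∀ t, |∑ s, pDist P μ π t s * k s| ≤ ∑ s, |k s| :=
    fun t => weighted_abs_le _ _ (hp0 t) (hple t)
  have hr_bd : ∀ t, |∑ s, ∑ a, pDist P μ π t s * π s a * R s a| ≤ ∑ s, ∑ a, |R s a| := by
    intro t
    calc |∑ s, ∑ a, pDist P μ π t s * π s a * R s a|
        ≤ ∑ s, |∑ a, pDist P μ π t s * π s a * R s a| := Finset.abs_sum_le_sum_abs _ _
      _ ≤ ∑ s, ∑ a, |pDist P μ π t s * π s a * R s a| :=
          Finset.sum_le_sum fun s _ => Finset.abs_sum_le_sum_abs _ _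
      _ ≤ ∑ s, ∑ a, |R s a| := by
          refine Finset.sum_le_sum fun s _ => Finset.sum_le_sum fun a _ => ?_
          rw [abs_mul, abs_mul, abs_of_nonneg (hp0 t s), abs_of_nonneg (hπ0' s a)]
          have h1 : pDist P μ π t s * π s a ≤ 1 :=
            mul_le_one₀ (hple t s) (hπ0' s a) (hπle s a)
          have h2 : 0 ≤ pDist P μ π t s * π s a := mul_nonneg (hp0 t s) (hπ0' s a)
          nlinarith [abs_nonneg (R s a)]
  have hr'_bd : ∀ t, |∑ s, ∑ a, pDist P μ π' t s * π' s a * R s a| ≤ ∑ s, ∑ a, |R s a| := by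
    intro t
    calc |∑ s, ∑ a, pDist P μ π' t s * π' s a * R s a|
        ≤ ∑ s, |∑ a, pDist P μ π' t s * π' s a * R s a| := Finset.abs_sum_le_sum_abs _ _
      _ ≤ ∑ s, ∑ a, |pDist P μ π' t s * π' s a * R s a| :=
          Finset.sum_le_sum fun s _ => Finset.abs_sum_le_sum_abs _ _
      _ ≤ ∑ s, ∑ a, |R s a| := by
          refine Finset.sum_le_sum fun s _ => Finset.sum_le_sum fun a _ => ?_
          rw [abs_mul, abs_mul, abs_of_nonneg (hp'0 t s), abs_of_nonneg (hπ'0 s a)]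
          have h1 : pDist P μ π' t s * π' s a ≤ 1 :=
            mul_le_one₀ (hp'le t s) (hπ'0 s a) (hπ'le s a)
          have h2 : 0 ≤ pDist P μ π' t s * π' s a := mul_nonneg (hp'0 t s) (hπ'0 s a)
          nlinarith [abs_nonneg (R s a)]
  -- summabilities
  have hsum_r : Summable (fun t => γ ^ t * ∑ s, ∑ a, pDist P μ π t s * π s a * R s a) :=
    summable_geom_bdd hγ0' hγ1 hr_bd
  have hsum_r' : Summable (fun t => γ ^ t * ∑ s, ∑ a, pDist P μ π' t s * π' s a * R s a) :=
    summable_geom_bdd hγ0' hγ1 hr'_bd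
  have hsum_g : Summable (fun t => γ ^ t * ∑ s, pDist P μ π t s * c s) :=
    summable_geom_bdd hγ0' hγ1 hg_bd
  have hsum_h : Summable (fun t => γ ^ t * ∑ s, pDist P μ π t s * k s) :=
    summable_geom_bdd hγ0' hγ1 hh_bd
  have hsum_rg : Summable (fun t => γ ^ t *
      ((∑ s, ∑ a, pDist P μ π t s * π s a * R s a) - ∑ s, pDist P μ π t s * c s)) := by
    refine summable_geom_bdd hγ0' hγ1 (C := (∑ s, ∑ a, |R s a|) + ∑ s, |c s|) ?_
    intro t
    calc |(∑ s, ∑ a, pDist P μ π t s * π s a * R s a) - ∑ s, pDist P μ π t s * c s|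
        ≤ |∑ s, ∑ a, pDist P μ π t s * π s a * R s a| + |∑ s, pDist P μ π t s * c s| :=
          abs_sub _ _
      _ ≤ _ := add_le_add (hr_bd t) (hg_bd t)
  have hsum_p : ∀ s, Summable (fun t => γ ^ t * pDist P μ π t s) := by
    intro s
    refine summable_geom_bdd hγ0' hγ1 (C := 1) fun t => ?_
    rw [abs_of_nonneg (hp0 t s)]; exact hple t s
  -- J(π') = ∑ μ V'
  have hJ' : Jret P μ γ R π' = ∑ s, μ s * V' s := by
    have h := tsum_of_telescope (u := fun t => ∑ s, pDist P μ π' t s * V' s)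
      (b := fun t => ∑ s, ∑ a, pDist P μ π' t s * π' s a * R s a)
      hγ0' hγ1 (fun t => hrec' t) hu_bd hsum_r'
    simp only [Jret]
    rw [h]
    simp [pDist]
  -- telescoping for π
  have hWtel : ∑' t, γ ^ t *
      ((∑ s, ∑ a, pDist P μ π t s * π s a * R s a) - ∑ s, pDist P μ π t s * c s)
      = ∑ s, μ s * V' s := by
    have h := tsum_of_telescope (u := fun t => ∑ s, pDist P μ π t s * V' s)
      (b := fun t => (∑ s, ∑ a, pDist P μ π t s * π s a * R s a)
        - ∑ s, pDist P μ π t s * c s)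
      hγ0' hγ1 (fun t => hrecw t) hw_bd hsum_rg
    rw [h]
    simp [pDist]
  -- split the telescoped sum
  have hG_val : ∑' t, γ ^ t * ∑ s, pDist P μ π t s * c s
      = Jret P μ γ R π - ∑ s, μ s * V' s := by
    have he : (fun t => γ ^ t *
        ((∑ s, ∑ a, pDist P μ π t s * π s a * R s a) - ∑ s, pDist P μ π t s * c s))
        = fun t => γ ^ t * (∑ s, ∑ a, pDist P μ π t s * π s a * R s a)
          - γ ^ t * ∑ s, pDist P μ π t s * c s := funext fun t => by ring
    rw [he] at hWtel
    rw [Summable.tsum_sub hsum_r hsum_g] at hWtel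
    have hJπ : Jret P μ γ R π
        = ∑' t, γ ^ t * ∑ s, ∑ a, pDist P μ π t s * π s a * R s a := by
      simp only [Jret]
    linarith
  have hdiff : Jret P μ γ R π - Jret P μ γ R π'
      = ∑' t, γ ^ t * ∑ s, pDist P μ π t s * c s := by
    rw [hJ', hG_val]
  -- lower bound the tsum
  have hsum_lb : Summable (fun t => γ ^ t * (β - E * ∑ s, pDist P μ π t s * k s)) := by
    refine summable_geom_bdd hγ0' hγ1 (C := |β| + E * ∑ s, |k s|) fun t => ?_
    calc |β - E * ∑ s, pDist P μ π t s * k s|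
        ≤ |β| + |E * ∑ s, pDist P μ π t s * k s| := abs_sub _ _
      _ ≤ |β| + E * ∑ s, |k s| := by
          rw [abs_mul, abs_of_nonneg hE0]
          exact add_le_add_right (mul_le_mul_of_nonneg_left (hh_bd t) hE0) _
  have hlb : ∑' t, γ ^ t * (β - E * ∑ s, pDist P μ π t s * k s)
      ≤ ∑' t, γ ^ t * ∑ s, pDist P μ π t s * c s := by
    refine Summable.tsum_le_tsum (fun t => ?_) hsum_lb hsum_g
    refine mul_le_mul_of_nonneg_left ?_ (pow_nonneg hγ0' t)
    have he : ∑ s, pDist P μ π t s * (β - E * k s)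
        = (∑ s, pDist P μ π t s) * β - E * ∑ s, pDist P μ π t s * k s := by
      rw [Finset.sum_mul, Finset.mul_sum, ← Finset.sum_sub_distrib]
      exact Finset.sum_congr rfl fun s _ => by ring
    calc β - E * ∑ s, pDist P μ π t s * k s
        = ∑ s, pDist P μ π t s * (β - E * k s) := by rw [he, hp1 t, one_mul]
      _ ≤ ∑ s, pDist P μ π t s * c s :=
          Finset.sum_le_sum fun s _ => mul_le_mul_of_nonneg_left (hc_lb s) (hp0 t s)
  -- evaluate the lower bound
  have hswap : ∑' t, γ ^ t * ∑ s, pDist P μ π t s * k s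
      = ∑ s, k s * (dvisit P μ γ π s / (1 - γ)) := by
    have he : (fun t => γ ^ t * ∑ s, pDist P μ π t s * k s)
        = fun t => ∑ s, k s * (γ ^ t * pDist P μ π t s) := by
      funext t
      rw [Finset.mul_sum]
      exact Finset.sum_congr rfl fun s _ => by ring
    rw [he, Summable.tsum_finsetSum (fun s _ => (hsum_p s).mul_left (k s))]
    refine Finset.sum_congr rfl fun s _ => ?_
    rw [tsum_mul_left]
    congr 1
    have hd : dvisit P μ γ π s = (1 - γ) * ∑' t, γ ^ t * pDist P μ π t s := rfl
    rw [hd]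
    field_simp
  have hgeo : ∑' t, γ ^ t * (β - E * ∑ s, pDist P μ π t s * k s)
      = β * (1 - γ)⁻¹ - E * ∑ s, k s * (dvisit P μ γ π s / (1 - γ)) := by
    have he : (fun t => γ ^ t * (β - E * ∑ s, pDist P μ π t s * k s))
        = fun t => β * γ ^ t - E * (γ ^ t * ∑ s, pDist P μ π t s * k s) :=
      funext fun t => by ring
    rw [he, Summable.tsum_sub ((summable_geometric_of_lt_one hγ0' hγ1).mul_left β)
      (hsum_h.mul_left E), tsum_mul_left, tsum_mul_left,
      tsum_geometric_of_lt_one hγ0' hγ1, hswap]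
  -- dvisit facts
  have hd0 : ∀ s, 0 ≤ dvisit P μ γ π s := by
    intro s
    exact mul_nonneg h1γ.le
      (tsum_nonneg fun t => mul_nonneg (pow_nonneg hγ0' t) (hp0 t s))
  have hd1 : ∑ s, dvisit P μ γ π s = 1 := by
    have h1 : ∑ s, dvisit P μ γ π s
        = (1 - γ) * ∑ s, ∑' t, γ ^ t * pDist P μ π t s := by
      rw [Finset.mul_sum]
      exact Finset.sum_congr rfl fun s _ => rfl
    rw [h1, ← Summable.tsum_finsetSum (fun s _ => hsum_p s)]
    have h2 : ∀ t : ℕ, ∑ s, γ ^ t * pDist P μ π t s = γ ^ t := by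
      intro t
      rw [← Finset.mul_sum, hp1 t, mul_one]
    rw [tsum_congr h2, tsum_geometric_of_lt_one hγ0' hγ1]
    field_simp
  -- Jensen step
  have hjen : ∑ s, dvisit P μ γ π s * k s
      ≤ Real.sqrt (2 * ∑ s, dvisit P μ γ π s * KL (π s) (πb s)) := by
    have he : ∀ s, dvisit P μ γ π s * k s
        = Real.sqrt (dvisit P μ γ π s)
          * Real.sqrt (dvisit P μ γ π s * (2 * KL (π s) (πb s))) := by
      intro s
      rw [← Real.sqrt_mul (hd0 s)]
      have h2 : dvisit P μ γ π s * (dvisit P μ γ π s * (2 * KL (π s) (πb s)))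
          = (dvisit P μ γ π s) ^ 2 * (2 * KL (π s) (πb s)) := by ring
      rw [h2, Real.sqrt_mul (sq_nonneg _), Real.sqrt_sq (hd0 s), hk_def]
    have h3 : ∑ s, dvisit P μ γ π s * (2 * KL (π s) (πb s))
        = 2 * ∑ s, dvisit P μ γ π s * KL (π s) (πb s) := by
      rw [Finset.mul_sum]
      exact Finset.sum_congr rfl fun s _ => by ring
    calc ∑ s, dvisit P μ γ π s * k s
        = ∑ s, Real.sqrt (dvisit P μ γ π s)
            * Real.sqrt (dvisit P μ γ π s * (2 * KL (π s) (πb s))) :=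
          Finset.sum_congr rfl fun s _ => he s
      _ ≤ Real.sqrt (∑ s, dvisit P μ γ π s)
            * Real.sqrt (∑ s, dvisit P μ γ π s * (2 * KL (π s) (πb s))) :=
          Real.sum_sqrt_mul_sqrt_le _ (fun s => hd0 s)
            (fun s => mul_nonneg (hd0 s) (by linarith [hKL0 s]))
      _ = Real.sqrt (2 * ∑ s, dvisit P μ γ π s * KL (π s) (πb s)) := by
          rw [hd1, Real.sqrt_one, one_mul, h3]
  -- final assembly
  have hsum_dk : ∑ s, k s * (dvisit P μ γ π s / (1 - γ))
      = (∑ s, dvisit P μ γ π s * k s) / (1 - γ) := by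
    rw [Finset.sum_div]
    exact Finset.sum_congr rfl fun s _ => by ring
  have hfinal1 : E * ∑ s, k s * (dvisit P μ γ π s / (1 - γ))
      ≤ (E / (1 - γ)) * Real.sqrt (2 * ∑ s, dvisit P μ γ π s * KL (π s) (πb s)) := by
    rw [hsum_dk]
    have h4 : E * ((∑ s, dvisit P μ γ π s * k s) / (1 - γ))
        = (E / (1 - γ)) * ∑ s, dvisit P μ γ π s * k s := by ring
    rw [h4]
    exact mul_le_mul_of_nonneg_left hjen (div_nonneg hE0 h1γ.le)
  have hβdiv : β * (1 - γ)⁻¹ = β / (1 - γ) := by ring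
  rw [ge_iff_le, hdiff]
  calc β / (1 - γ) - (E / (1 - γ))
        * Real.sqrt (2 * ∑ s, dvisit P μ γ π s * KL (π s) (πb s))
      ≤ β * (1 - γ)⁻¹ - E * ∑ s, k s * (dvisit P μ γ π s / (1 - γ)) := by
        rw [hβdiv]; linarith
    _ = ∑' t, γ ^ t * (β - E * ∑ s, pDist P μ π t s * k s) := hgeo.symm
    _ ≤ ∑' t, γ ^ t * ∑ s, pDist P μ π t s * c s := hlb
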